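/- Let L be the (K,D) AIR matrix, k ∈ E_i for i ∈ [0, ⌈l/2⌉−1], with k_R = (β_{2i}−1)λ_{2i} + cλ_{2i+1} + d, 0 ≤ d < λ_{2i+1}. Let t_{k,1} < ... < t_{k,p_k} be the r-th down-distances of L(k+d_down(k), k+μ_k), where μ_k = λ_{2i} − cλ_{2i+1}. Then t_{k,p_k} < μ_k − d; in particular t_{k,p_k} < μ_k. -/
import Mathlib


/-- Entry (j,k) of the AIR matrix of size K × n (n = K - D), as a Boolean. -/
def airEntry : ℕ → ℕ → ℕ → ℕ → Bool
  | K, n, j, k =>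
    if h : n = 0 ∨ K ≤ n then decide (j = k)
    else
      if j < K - K % n then decide (j % n = k % n)
      else
        if k < n - n % (K % n) then decide (k % (K % n) = j - (K - K % n))
        else airEntry (K % n) (n % (K % n)) (j - (K - K % n)) (k - (n - n % (K % n)))
  termination_by K n _ _ => K
  decreasing_by
    push_neg at h
    exact lt_trans (Nat.mod_lt _ (Nat.pos_of_ne_zero h.1)) h.2

/-- The pair (λ_{i-1}, λ_i) of the Euclidean chain, with λ_{-1} = K - D and λ₀ = D. -/
def lamPair (K D : ℕ) : ℕ → ℕ × ℕ
  | 0 => (K - D, D)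
  | i + 1 =>
    let p := lamPair K D i
    (p.2, if p.2 = 0 then 0 else p.1 % p.2)

/-- λ_i of the Euclidean chain. -/
def lam (K D i : ℕ) : ℕ := (lamPair K D i).2

/-- λ_{i-1} of the Euclidean chain (so `lamS K D 0 = K - D`). -/
def lamS (K D i : ℕ) : ℕ := (lamPair K D i).1

/-- β_i = λ_{i-1} / λ_i of the Euclidean chain. -/
def beta (K D i : ℕ) : ℕ := (lamPair K D i).1 / (lamPair K D i).2

/-- down-distance of the diagonal entry L(k,k) of the K × n AIR matrix. -/
noncomputable def ddown (K n k : ℕ) : ℕ :=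
  sSup {t : ℕ | 0 < t ∧ k + t < K ∧ airEntry K n (k + t) k = true}

/-- up-distance of the entry L(j,k) of the K × n AIR matrix. -/
noncomputable def dup (K n j k : ℕ) : ℕ :=
  j - sSup {j' : ℕ | j' < j ∧ airEntry K n j' k = true}

/-- right-distance of the entry L(j,k) of the K × n AIR matrix. -/
noncomputable def dright (K n j k : ℕ) : ℕ :=
  sInf {t : ℕ | 0 < t ∧ k + t < n ∧ airEntry K n j (k + t) = true}


def stepP (p : ℕ × ℕ) : ℕ × ℕ := (p.1 % p.2, p.2 % (p.1 % p.2))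

lemma stepP_le (i : ℕ) (p : ℕ × ℕ) :
    (stepP^[i] p).1 ≤ p.1 ∧ (stepP^[i] p).2 ≤ p.2 := by
  induction i generalizing p with
  | zero => simp
  | succ i ih =>
    rw [Function.iterate_succ_apply]
    exact ⟨le_trans (ih _).1 (Nat.mod_le _ _), le_trans (ih _).2 (Nat.mod_le _ _)⟩

lemma airEntry_rec (K n j k : ℕ) (hn : n ≠ 0) (hnK : n < K)
    (hj : K - K % n ≤ j) (hk : n - n % (K % n) ≤ k) :
    airEntry K n j k
      = airEntry (K % n) (n % (K % n)) (j - (K - K % n)) (k - (n - n % (K % n))) := by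
  rw [airEntry, dif_neg (by omega), if_neg (by omega), if_neg (by omega)]

lemma airEntry_mid (K n j k : ℕ) (hn : n ≠ 0) (hnK : n < K)
    (hj : K - K % n ≤ j) (hk : k < n - n % (K % n)) :
    airEntry K n j k = decide (k % (K % n) = j - (K - K % n)) := by
  rw [airEntry, dif_neg (by omega), if_neg (by omega), if_pos hk]

lemma core (i : ℕ) : ∀ A B a b k,
    stepP^[i] (A, B) = (a, b) →
    (∀ j ≤ i, (stepP^[j] (A, B)).2 ≠ 0 ∧ (stepP^[j] (A, B)).2 < (stepP^[j] (A, B)).1) →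
    a % b ≠ 0 →
    B - b + (b / (a % b) - 1) * (a % b) ≤ k →
    k < B - b % (a % b) →
    airEntry A B (A - a % b + (k - (B - b + (b / (a % b) - 1) * (a % b)))) k = true := by
  induction i with
  | zero =>
    intro A B a b k hab hg hr hk1 hk2
    simp only [Function.iterate_zero, id] at hab
    injection hab with h1 h2; subst h1; subst h2
    have hg0 := hg 0 (Nat.le_refl _)
    simp only [Function.iterate_zero, id] at hg0
    obtain ⟨hB0, hBA⟩ := hg0
    have hrB : A % B < B := Nat.mod_lt _ (Nat.pos_of_ne_zero hB0)
    have hβ1 : 1 ≤ B / (A % B) :=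
      (Nat.one_le_div_iff (Nat.pos_of_ne_zero hr)).mpr (le_of_lt hrB)
    obtain ⟨β₁, hβv⟩ : ∃ m, B / (A % B) = m + 1 := ⟨B / (A % B) - 1, by omega⟩
    rw [airEntry_mid A B _ k hB0 hBA (by omega) (by simpa using hk2)]
    rw [hβv] at hk1 ⊢
    simp only [Nat.add_sub_cancel] at hk1 ⊢
    simp only [Nat.sub_self, Nat.zero_add] at hk1 ⊢
    have hdm := Nat.div_add_mod B (A % B)
    rw [hβv] at hdm
    have hdiv : k / (A % B) = β₁ := by
      refine Nat.div_eq_of_lt_le hk1 ?_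
      have hBr := Nat.mod_le B (A % B)
      calc k < B - B % (A % B) := by simpa using hk2
        _ ≤ (β₁ + 1) * (A % B) := by rw [mul_comm]; omega
    have hdm2 := Nat.div_add_mod k (A % B)
    rw [hdiv] at hdm2
    have heq : (A - A % B + (k - β₁ * (A % B))) - (A - A % B) = k - β₁ * (A % B) := by omega
    rw [heq]
    have : k % (A % B) = k - β₁ * (A % B) := by
      have hcomm : A % B * β₁ = β₁ * (A % B) := Nat.mul_comm _ _
      omega
    simp [this]
  | succ i ih =>
    intro A B a b k hab hg hr hk1 hk2
    have hg0 := hg 0 (Nat.zero_le _)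
    simp only [Function.iterate_zero, id] at hg0
    obtain ⟨hB0, hBA⟩ := hg0
    have hstep : stepP (A, B) = (A % B, B % (A % B)) := rfl
    have hab' : stepP^[i] (A % B, B % (A % B)) = (a, b) := by
      rw [← hstep, ← Function.iterate_succ_apply]; exact hab
    have hg' : ∀ j ≤ i, (stepP^[j] (A % B, B % (A % B))).2 ≠ 0 ∧
        (stepP^[j] (A % B, B % (A % B))).2 < (stepP^[j] (A % B, B % (A % B))).1 := by
      intro j hj
      have := hg (j + 1) (by omega)
      rwa [Function.iterate_succ_apply, hstep] at this
    have hle := stepP_le i (A % B, B % (A % B))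
    rw [hab'] at hle
    have hres := ih (A % B) (B % (A % B)) a b (k - (B - B % (A % B))) hab' hg' hr ?_ ?_
    · have haA : a % b ≤ A % B := le_trans (Nat.mod_le _ _) hle.1
      have hbB : b % (a % b) ≤ b := Nat.mod_le _ _
      have hbB' : b ≤ B % (A % B) := hle.2
      have hBB : B % (A % B) ≤ B := Nat.mod_le _ _
      have hAB : A % B ≤ A := Nat.mod_le _ _
      rw [airEntry_rec A B _ k hB0 hBA (by omega) (by omega)]
      convert hres using 2
      omega
    · have hbB' : b ≤ B % (A % B) := hle.2
      have hBB : B % (A % B) ≤ B := Nat.mod_le _ _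
      omega
    · have hbB' : b ≤ B % (A % B) := hle.2
      have hBB : B % (A % B) ≤ B := Nat.mod_le _ _
      have hbB : b % (a % b) ≤ b := Nat.mod_le _ _
      omega

lemma lamS_succ (K D j : ℕ) : lamS K D (j + 1) = lam K D j := rfl

lemma lamPair_eta (K D j : ℕ) : lamPair K D j = (lamS K D j, lam K D j) := rfl

lemma lam_succ (K D j : ℕ) (h : lam K D j ≠ 0) :
    lam K D (j + 1) = lamS K D j % lam K D j := by
  show (lamPair K D (j+1)).2 = _
  rw [lamPair]
  simp only [lam, lamS] at h ⊢
  rw [if_neg h]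

lemma lam_succ_le (K D j : ℕ) : lam K D (j + 1) ≤ lam K D j := by
  by_cases h : lam K D j = 0
  · show (lamPair K D (j+1)).2 ≤ _
    rw [lamPair]
    simp only [lam] at h
    simp [h]
  · rw [lam_succ K D j h]
    exact le_of_lt (Nat.mod_lt _ (Nat.pos_of_ne_zero h))

lemma lam_lt (K D j : ℕ) (h : lam K D j ≠ 0) : lam K D (j + 1) < lam K D j := by
  rw [lam_succ K D j h]; exact Nat.mod_lt _ (Nat.pos_of_ne_zero h)

lemma lam_anti (K D : ℕ) {j j' : ℕ} (h : j ≤ j') : lam K D j' ≤ lam K D j := by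
  induction j' with
  | zero => simp_all
  | succ j' ih =>
    rcases Nat.lt_or_ge j (j' + 1) with h' | h'
    · exact le_trans (lam_succ_le K D j') (ih (by omega))
    · have : j = j' + 1 := by omega
      subst this; rfl

lemma stepP_lamPair (K D j : ℕ) (h1 : lam K D j ≠ 0) (h2 : lam K D (j + 1) ≠ 0) :
    stepP (lamPair K D j) = lamPair K D (j + 2) := by
  have e1 : lam K D (j + 1) = lamS K D j % lam K D j := lam_succ K D j h1
  have e2 : lam K D (j + 2) = lamS K D (j + 1) % lam K D (j + 1) := lam_succ K D (j + 1) h2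
  rw [lamPair_eta K D (j + 2), lamPair_eta K D j]
  show (lamS K D j % lam K D j, lam K D j % (lamS K D j % lam K D j)) = _
  rw [e2, e1, lamS_succ, lamS_succ, e1]

lemma iter_stepP_lamPair (K D : ℕ) : ∀ m j, (∀ t < 2 * m, lam K D (j + t) ≠ 0) →
    stepP^[m] (lamPair K D j) = lamPair K D (j + 2 * m) := by
  intro m
  induction m with
  | zero => intro j _; simp
  | succ m ih =>
    intro j h
    rw [Function.iterate_succ_apply, stepP_lamPair K D j (by simpa using h 0 (by omega))
      (h 1 (by omega)), ih (j + 2) (fun t ht => by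
        have := h (2 + t) (by omega); rwa [← Nat.add_assoc] at this)]
    congr 1
    omega

lemma add_mod_le (k m : ℕ) (h : m ≤ k) : m + k % m ≤ k := by
  rcases Nat.eq_zero_or_pos m with h0 | h0
  · subst h0; simp [Nat.mod_zero]
  · have h1 : 1 ≤ k / m := (Nat.one_le_div_iff h0).mpr h
    have h2 := Nat.div_add_mod k m
    have h3 : m * 1 ≤ m * (k / m) := Nat.mul_le_mul_left m h1
    rw [Nat.mul_one] at h3
    omega

lemma lamS_le (K D : ℕ) (hD : 0 < D) (hDK : D < K) (i : ℕ) : lamS K D (2 * i) ≤ K - D := by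
  cases i with
  | zero => exact Nat.le_refl _
  | succ m =>
    have h1 : lamS K D (2 * (m + 1)) = lam K D (2 * m + 1) := by
      have he : 2 * (m + 1) = (2 * m + 1) + 1 := by omega
      rw [he, lamS_succ]
    rw [h1]
    have h2 : lam K D (2 * m + 1) ≤ lam K D 1 := lam_anti K D (by omega)
    have e1 : lam K D 1 = (K - D) % D := lam_succ K D 0 (by show D ≠ 0; omega)
    have h3 : (K - D) % D ≤ K - D := Nat.mod_le _ _
    omega

lemma bridge (K D i : ℕ) (hD : 0 < D) (hDK : D < K)
    (hnz : ∀ j ≤ 2 * i + 1, lam K D j ≠ 0)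
    (hok : D < K - D ∨ 1 ≤ i) :
    ∃ i' a, stepP^[i'] (K, K - D) = (a, lamS K D (2 * i)) ∧
      a % lamS K D (2 * i) = lam K D (2 * i) ∧
      ∀ j ≤ i', (stepP^[j] (K, K - D)).2 ≠ 0 ∧
        (stepP^[j] (K, K - D)).2 < (stepP^[j] (K, K - D)).1 := by
  have lam0 : lam K D 0 = D := rfl
  have hguard : ∀ m, 1 ≤ m → m ≤ 2 * i + 1 →
      (lamPair K D m).2 ≠ 0 ∧ (lamPair K D m).2 < (lamPair K D m).1 := by
    intro m h1 hm
    obtain ⟨m', rfl⟩ : ∃ m', m = m' + 1 := ⟨m - 1, by omega⟩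
    refine ⟨hnz _ hm, ?_⟩
    show lam K D (m' + 1) < lamS K D (m' + 1)
    rw [lamS_succ]
    exact lam_lt K D m' (hnz m' (by omega))
  have hdeep : 1 ≤ i → (lamPair K D (2 * i - 1)).2 = lamS K D (2 * i) ∧
      (lamPair K D (2 * i - 1)).1 % lamS K D (2 * i) = lam K D (2 * i) := by
    intro h1
    have h2i : 2 * i - 1 + 1 = 2 * i := by omega
    have hnz1 : lam K D (2 * i - 1) ≠ 0 := hnz _ (by omega)
    have e1 : lamS K D (2 * i) = lam K D (2 * i - 1) := by
      conv_lhs => rw [← h2i]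
      rw [lamS_succ]
    have e2 : lam K D (2 * i) = lamS K D (2 * i - 1) % lam K D (2 * i - 1) := by
      rw [← h2i]; exact lam_succ K D (2 * i - 1) hnz1
    exact ⟨e1.symm, by rw [e1, e2]; rfl⟩
  have hguard0 : (stepP^[0] (K, K - D)).2 ≠ 0 ∧
      (stepP^[0] (K, K - D)).2 < (stepP^[0] (K, K - D)).1 := by
    simp only [Function.iterate_zero, id_eq]
    exact ⟨by show K - D ≠ 0; omega, by show K - D < K; omega⟩
  rcases Nat.lt_or_ge D (K - D) with hc | hc2
  · -- case D < K - D
    have hKn : K % (K - D) = D := by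
      have h := Nat.add_mod_left (K - D) D
      rw [show K - D + D = K by omega] at h
      rw [h, Nat.mod_eq_of_lt hc]
    rcases Nat.eq_zero_or_pos i with hi0 | hi1
    · subst hi0
      refine ⟨0, K, rfl, hKn, ?_⟩
      intro j hj
      have : j = 0 := by omega
      subst this
      exact hguard0
    · have hQ1 : stepP (K, K - D) = lamPair K D 1 := by
        have e1 : lam K D 1 = (K - D) % D := lam_succ K D 0 (by show D ≠ 0; omega)
        show (K % (K - D), (K - D) % (K % (K - D))) = _
        rw [lamPair_eta, hKn, lamS_succ, lam0, e1]
      have hQj : ∀ j, 1 ≤ j → j ≤ i → stepP^[j] (K, K - D) = lamPair K D (2 * j - 1) := by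
        intro j h1 hj
        obtain ⟨j', rfl⟩ : ∃ j', j = j' + 1 := ⟨j - 1, by omega⟩
        rw [Function.iterate_succ_apply, hQ1,
          iter_stepP_lamPair K D j' 1 (fun u hu => hnz (1 + u) (by omega))]
        congr 1
        omega
      obtain ⟨hb', ha'⟩ := hdeep hi1
      refine ⟨i, (lamPair K D (2 * i - 1)).1, ?_, ha', ?_⟩
      · rw [hQj i hi1 (Nat.le_refl _), ← hb']
      · intro j hj
        rcases Nat.eq_zero_or_pos j with h0 | h1'
        · subst h0; exact hguard0
        · rw [hQj j h1' hj]
          exact hguard (2 * j - 1) (by omega) (by omega)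
  · -- case K - D ≤ D
    have hi1 : 1 ≤ i := by rcases hok with h | h; omega; exact h
    have e1 : lam K D 1 = (K - D) % D := lam_succ K D 0 (by show D ≠ 0; omega)
    have hnD : K - D < D := by
      rcases Nat.lt_or_ge (K - D) D with h | h
      · exact h
      · exfalso
        have hEq : K - D = D := by omega
        rw [hEq, Nat.mod_self] at e1
        exact hnz 1 (by omega) e1
    have hlam1 : lam K D 1 = K - D := by rw [e1, Nat.mod_eq_of_lt hnD]
    have hKn : K % (K - D) = D % (K - D) := by
      have h := Nat.add_mod_left (K - D) D
      rw [show K - D + D = K by omega] at h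
      exact h
    have hlam1nz : lam K D 1 ≠ 0 := hnz 1 (by omega)
    have e2 : lam K D 2 = D % (K - D) := by
      have h := lam_succ K D 1 hlam1nz
      rw [h, lamS_succ, lam0, hlam1]
    rcases eq_or_lt_of_le hi1 with hi1' | hi2
    · -- i = 1
      subst hi1'
      refine ⟨0, K, ?_, ?_, ?_⟩
      · show (K, K - D) = (K, lamS K D (2 * 1))
        rw [show (2 * 1 : ℕ) = 1 + 1 from rfl, lamS_succ, hlam1]
      · show K % lamS K D (2 * 1) = lam K D (2 * 1)
        rw [show (2 * 1 : ℕ) = 1 + 1 from rfl, lamS_succ, hlam1, hKn]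
        exact e2.symm
      · intro j hj
        have : j = 0 := by omega
        subst this
        exact hguard0
    · -- i ≥ 2
      have hQ1 : stepP (K, K - D) = lamPair K D 3 := by
        show (K % (K - D), (K - D) % (K % (K - D))) = _
        have eS3 : lamS K D 3 = lam K D 2 := lamS_succ K D 2
        have e3 : lam K D 3 = lamS K D 2 % lam K D 2 := lam_succ K D 2 (hnz 2 (by omega))
        rw [lamPair_eta, hKn, eS3, e3, lamS_succ, hlam1, e2]
      have hQj : ∀ j, 1 ≤ j → j ≤ i - 1 → stepP^[j] (K, K - D) = lamPair K D (2 * j + 1) := by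
        intro j h1 hj
        obtain ⟨j', rfl⟩ : ∃ j', j = j' + 1 := ⟨j - 1, by omega⟩
        rw [Function.iterate_succ_apply, hQ1,
          iter_stepP_lamPair K D j' 3 (fun u hu => hnz (3 + u) (by omega))]
        congr 1
        omega
      obtain ⟨hb', ha'⟩ := hdeep (by omega)
      refine ⟨i - 1, (lamPair K D (2 * i - 1)).1, ?_, ha', ?_⟩
      · rw [hQj (i - 1) (by omega) (Nat.le_refl _), show 2 * (i - 1) + 1 = 2 * i - 1 by omega,
          ← hb']
      · intro j hj
        rcases Nat.eq_zero_or_pos j with h0 | h1'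
        · subst h0; exact hguard0
        · rw [hQj j h1' hj]
          exact hguard (2 * j + 1) (by omega) (by omega)

/-- For k ∈ E_i, every r-th down-distance t of L(k+d_down(k), k+μ_k) satisfies
t < μ_k − d (in particular t_{k,p_k} < μ_k − d). -/
theorem stmt18 (K D l i k c d t : ℕ) (hD : 0 < D) (hDK : D < K)
    (hl : lam K D (l + 1) = 0) (hmin : ∀ j ≤ l, lam K D j ≠ 0)
    (hi : 2 * i + 1 ≤ l)
    (hk1 : K - D - lamS K D (2 * i) + (beta K D (2 * i) - 1) * lam K D (2 * i) ≤ k)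
    (hk2 : k < K - D - lam K D (2 * i + 1))
    (hkR : k % (K - D - lamS K D (2 * i)) =
      (beta K D (2 * i) - 1) * lam K D (2 * i) + c * lam K D (2 * i + 1) + d)
    (hd : d < lam K D (2 * i + 1))
    (ht0 : 0 < t) (htK : k + ddown K (K - D) k + t < K)
    (hte : airEntry K (K - D) (k + ddown K (K - D) k + t)
      (k + (lam K D (2 * i) - c * lam K D (2 * i + 1))) = true) :
    t < (lam K D (2 * i) - c * lam K D (2 * i + 1)) - d := by
  have hr0 : lam K D (2 * i) ≠ 0 := hmin _ (by omega)
  have hs0 : lam K D (2 * i + 1) ≠ 0 := hmin _ hi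
  have hok : D < K - D ∨ 1 ≤ i := by
    by_contra h
    push_neg at h
    obtain ⟨h1, h2⟩ := h
    have hi0 : i = 0 := by omega
    subst hi0
    have e1 : lam K D 1 = (K - D) % D := lam_succ K D 0 (by show D ≠ 0; omega)
    rcases Nat.lt_or_ge (K - D) D with hLt | hGe
    · rw [Nat.mod_eq_of_lt hLt] at e1
      have e1' : lam K D (2 * 0 + 1) = K - D := e1
      omega
    · have hEq : K - D = D := by omega
      rw [hEq, Nat.mod_self] at e1
      exact hs0 e1
  obtain ⟨i', a, hQ, hA, hG⟩ := bridge K D i hD hDK (fun j hj => hmin j (by omega)) hok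
  have hGi := hG i' (Nat.le_refl _)
  rw [hQ] at hGi
  obtain ⟨hb0, hba⟩ := hGi
  have hsr : lam K D (2 * i + 1) = lamS K D (2 * i) % lam K D (2 * i) :=
    lam_succ K D (2 * i) hr0
  have hrb : lam K D (2 * i) < lamS K D (2 * i) := by
    rw [← hA]; exact Nat.mod_lt _ (Nat.pos_of_ne_zero hb0)
  have hβ1 : 1 ≤ lamS K D (2 * i) / lam K D (2 * i) :=
    (Nat.one_le_div_iff (Nat.pos_of_ne_zero hr0)).mpr (le_of_lt hrb)
  obtain ⟨β₁, hβv⟩ : ∃ m, lamS K D (2 * i) / lam K D (2 * i) = m + 1 :=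
    ⟨lamS K D (2 * i) / lam K D (2 * i) - 1, by omega⟩
  have hbeta : beta K D (2 * i) = lamS K D (2 * i) / lam K D (2 * i) := rfl
  have hdm := Nat.div_add_mod (lamS K D (2 * i)) (lam K D (2 * i))
  rw [hβv, ← hsr] at hdm
  rw [hbeta, hβv, Nat.add_sub_cancel] at hk1 hkR
  have hONE := core i' K (K - D) a (lamS K D (2 * i)) k hQ hG
    (by rw [hA]; exact hr0)
    (by rw [hA, hβv, Nat.add_sub_cancel]; exact hk1)
    (by rw [hA, ← hsr]; exact hk2)
  rw [hA, hβv, Nat.add_sub_cancel] at hONE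
  have hbn : lamS K D (2 * i) ≤ K - D := lamS_le K D hD hDK i
  have hdm' : lam K D (2 * i) * β₁ + lam K D (2 * i) + lam K D (2 * i + 1)
      = lamS K D (2 * i) := by
    rw [Nat.mul_succ] at hdm
    omega
  have hPc : β₁ * lam K D (2 * i) = lam K D (2 * i) * β₁ := Nat.mul_comm _ _
  have hsn : lam K D (2 * i + 1) < lam K D (2 * i) := by
    rw [hsr]; exact Nat.mod_lt _ (Nat.pos_of_ne_zero hr0)
  have hrow : K - lam K D (2 * i) +
      (k - (K - D - lamS K D (2 * i) + β₁ * lam K D (2 * i)))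
      = k + (D + lam K D (2 * i + 1)) := by
    omega
  rw [hrow] at hONE
  have hmem : D + lam K D (2 * i + 1) ∈
      {u : ℕ | 0 < u ∧ k + u < K ∧ airEntry K (K - D) (k + u) k = true} :=
    ⟨by omega, by omega, hONE⟩
  have hbdd : BddAbove {u : ℕ | 0 < u ∧ k + u < K ∧ airEntry K (K - D) (k + u) k = true} :=
    ⟨K, fun x hx => by have := hx.2.1; omega⟩
  have hdd : D + lam K D (2 * i + 1) ≤ ddown K (K - D) k := le_csSup hbdd hmem
  have hm' : K - D - lamS K D (2 * i) ≤ k := by omega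
  have hsub := add_mod_le k (K - D - lamS K D (2 * i)) hm'
  rw [hkR] at hsub
  omega
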